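/- Let ν₁ > ν₂ ≥ 1 and E ∈ ℝ with ν₁ + ν₂ ≤ 2E. Define D = {(λ₁, λ₂) ∈ ℝ² : λ₁ ≥ 1, λ₂ ≥ 1, |4E − (λ₁ + λ₂)(ν₁ + ν₂)| ≤ |λ₁ − λ₂|(ν₁ − ν₂)}. Then the two-dimensional Lebesgue measure of D equals (ν₁ − ν₂)·(2E − (ν₁ + ν₂))² / (ν₁ ν₂ (ν₁ + ν₂)). -/

import Mathlib

/-!
STATEMENT 9: Let `ν₁ > ν₂ ≥ 1` and `E ∈ ℝ` with `ν₁ + ν₂ ≤ 2E`.  Let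
`D = {(λ₁, λ₂) : λ₁ ≥ 1, λ₂ ≥ 1, |4E − (λ₁ + λ₂)(ν₁ + ν₂)| ≤ |λ₁ − λ₂|(ν₁ − ν₂)}`.
Then the two-dimensional Lebesgue measure of `D` equals
`(ν₁ − ν₂)·(2E − (ν₁ + ν₂))² / (ν₁ ν₂ (ν₁ + ν₂))`.
-/

open MeasureTheory

open Set

theorem constrained_energy_domain_area (ν₁ ν₂ E : ℝ)
    (h1 : 1 ≤ ν₂) (h2 : ν₂ < ν₁) (hE : ν₁ + ν₂ ≤ 2 * E) :
    volume {p : ℝ × ℝ | 1 ≤ p.1 ∧ 1 ≤ p.2 ∧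
        |4 * E - (p.1 + p.2) * (ν₁ + ν₂)| ≤ |p.1 - p.2| * (ν₁ - ν₂)} =
      ENNReal.ofReal ((ν₁ - ν₂) * (2 * E - (ν₁ + ν₂)) ^ 2 / (ν₁ * ν₂ * (ν₁ + ν₂))) := by
  have hν₂ : (0:ℝ) < ν₂ := by linarith
  have hν₁ : (0:ℝ) < ν₁ := by linarith
  have hs : (0:ℝ) < ν₁ + ν₂ := by linarith
  set C : ℝ := 2 * E / (ν₁ + ν₂) with hC
  have hC1 : 1 ≤ C := (le_div_iff₀ hs).2 (by linarith)
  have hCs : C * (ν₁ + ν₂) = 2 * E := div_mul_cancel₀ _ (ne_of_gt hs)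
  set T : Set (ℝ × ℝ) :=
    {p | 1 ≤ p.2 ∧ 2*E ≤ ν₁*p.1 + ν₂*p.2 ∧ ν₂*p.1 + ν₁*p.2 ≤ 2*E} with hT
  set T' : Set (ℝ × ℝ) :=
    {p | 1 ≤ p.1 ∧ 2*E ≤ ν₁*p.2 + ν₂*p.1 ∧ ν₂*p.2 + ν₁*p.1 ≤ 2*E} with hT'
  have hTm : MeasurableSet T := by
    apply MeasurableSet.inter
    · exact measurableSet_le measurable_const measurable_snd
    apply MeasurableSet.inter
    · exact measurableSet_le measurable_const
        ((measurable_fst.const_mul ν₁).add (measurable_snd.const_mul ν₂))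
    · exact measurableSet_le
        ((measurable_fst.const_mul ν₂).add (measurable_snd.const_mul ν₁)) measurable_const
  have hT'm : MeasurableSet T' := by
    apply MeasurableSet.inter
    · exact measurableSet_le measurable_const measurable_fst
    apply MeasurableSet.inter
    · exact measurableSet_le measurable_const
        ((measurable_snd.const_mul ν₁).add (measurable_fst.const_mul ν₂))
    · exact measurableSet_le
        ((measurable_snd.const_mul ν₂).add (measurable_fst.const_mul ν₁)) measurable_const
  -- the set equals T ∪ T'
  have hDeq : {p : ℝ × ℝ | 1 ≤ p.1 ∧ 1 ≤ p.2 ∧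
        |4 * E - (p.1 + p.2) * (ν₁ + ν₂)| ≤ |p.1 - p.2| * (ν₁ - ν₂)} = T ∪ T' := by
    ext ⟨x, y⟩
    simp only [hT, hT', mem_setOf_eq, mem_union]
    constructor
    · rintro ⟨hx, hy, habs⟩
      rcases le_total y x with h | h
      · left
        rw [abs_of_nonneg (by linarith : (0:ℝ) ≤ x - y), abs_le] at habs
        exact ⟨hy, by linarith [habs.2], by linarith [habs.1]⟩
      · right
        rw [abs_of_nonpos (by linarith : x - y ≤ (0:ℝ)), abs_le] at habs
        exact ⟨hx, by linarith [habs.2], by linarith [habs.1]⟩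
    · rintro (⟨hy, ha, hb⟩ | ⟨hx, ha, hb⟩)
      · have hxy : y ≤ x := by nlinarith
        refine ⟨by linarith, hy, ?_⟩
        rw [abs_of_nonneg (by linarith : (0:ℝ) ≤ x - y), abs_le]
        constructor <;> nlinarith
      · have hxy : x ≤ y := by nlinarith
        refine ⟨hx, by linarith, ?_⟩
        rw [abs_of_nonpos (by linarith : x - y ≤ (0:ℝ)), abs_le]
        constructor <;> nlinarith
  rw [hDeq]
  -- intersection is null
  have hint : volume (T ∩ T') = 0 := by
    have hsub : T ∩ T' ⊆ {((C : ℝ), (C : ℝ))} := by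
      rintro ⟨x, y⟩ ⟨⟨hy, ha, hb⟩, ⟨hx, hc, hd⟩⟩
      have hxy : x = y := by nlinarith
      have hxC : x = C := by
        have : x * (ν₁ + ν₂) = 2 * E := by nlinarith
        rw [hC, eq_div_iff (ne_of_gt hs)]
        linarith [this]
      have hyC : y = C := by rw [← hxy]; exact hxC
      simp [hxC, hyC, Prod.ext_iff]
    refine measure_mono_null hsub ?_
    rw [← Set.singleton_prod_singleton, Measure.volume_eq_prod, Measure.prod_prod,
      Real.volume_singleton, zero_mul]
  have hunion : volume (T ∪ T') = volume T + volume T' := by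
    have h := measure_union_add_inter (μ := volume) T hT'm
    rw [hint, add_zero] at h
    exact h
  -- swap symmetry
  have hswap : volume T = volume T' := by
    have hpre : T = Prod.swap ⁻¹' T' := by
      ext ⟨x, y⟩
      simp only [hT, hT', mem_preimage, Prod.swap_prod_mk, mem_setOf_eq]
    rw [hpre]
    calc (volume : Measure (ℝ × ℝ)) (Prod.swap ⁻¹' T')
        = (volume.prod volume) (Prod.swap ⁻¹' T') := by rw [← Measure.volume_eq_prod]
      _ = (volume.prod volume) T' := (Measure.measurePreserving_swap).measure_preimage
            (by rw [← Measure.volume_eq_prod]; exact hT'm.nullMeasurableSet)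
      _ = volume T' := by rw [← Measure.volume_eq_prod]
  -- compute volume T'
  set f : ℝ → ℝ := fun x => (2*E - ν₂*x)/ν₁ with hf
  set g : ℝ → ℝ := fun x => (2*E - ν₁*x)/ν₂ with hg
  have hT'vol : volume T' =
      ENNReal.ofReal ((ν₁ - ν₂) * (2 * E - (ν₁ + ν₂)) ^ 2 / (2 * (ν₁ * ν₂ * (ν₁ + ν₂)))) := by
    rw [Measure.volume_eq_prod, Measure.prod_apply hT'm]
    have hsec : ∀ x : ℝ, (volume : Measure ℝ) (Prod.mk x ⁻¹' T') =
        (Icc (1:ℝ) C).indicator (fun x => ENNReal.ofReal (g x - f x)) x := by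
      intro x
      rcases le_or_gt 1 x with hx1 | hx1
      · have hpre : Prod.mk x ⁻¹' T' = Icc (f x) (g x) := by
          ext y
          simp only [hT', mem_preimage, mem_setOf_eq, mem_Icc, hf, hg]
          constructor
          · rintro ⟨-, ha, hb⟩
            constructor
            · rw [div_le_iff₀ hν₁]; linarith
            · rw [le_div_iff₀ hν₂]; linarith
          · rintro ⟨ha, hb⟩
            rw [div_le_iff₀ hν₁] at ha
            rw [le_div_iff₀ hν₂] at hb
            exact ⟨hx1, by linarith, by linarith⟩
        rw [hpre, Real.volume_Icc]
        rcases le_or_gt x C with hxC | hxC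
        · rw [indicator_of_mem (mem_Icc.2 ⟨hx1, hxC⟩)]
        · rw [indicator_of_notMem (by simp [mem_Icc]; intro _; linarith)]
          have hgf : g x - f x ≤ 0 := by
            have hxs : 2 * E < x * (ν₁ + ν₂) := by
              rw [hC, div_lt_iff₀ hs] at hxC; linarith
            rw [sub_nonpos, hf, hg, div_le_div_iff₀ hν₂ hν₁]
            nlinarith
          rw [ENNReal.ofReal_eq_zero.2 hgf]
      · have hpre : Prod.mk x ⁻¹' T' = ∅ := by
          ext y
          simp only [hT', mem_preimage, mem_setOf_eq, mem_empty_iff_false, iff_false]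
          rintro ⟨hx, -, -⟩; linarith
        rw [hpre, measure_empty, indicator_of_notMem (by simp [mem_Icc]; intro h; linarith)]
    rw [lintegral_congr hsec, lintegral_indicator measurableSet_Icc]
    have hcont : Continuous (fun x : ℝ => g x - f x) := by
      apply Continuous.sub
      · exact (continuous_const.sub (continuous_const.mul continuous_id)).div_const ν₂
      · exact (continuous_const.sub (continuous_const.mul continuous_id)).div_const ν₁
    have hInt : IntegrableOn (fun x : ℝ => g x - f x) (Icc 1 C) volume :=
      hcont.integrableOn_Icc
    have hnn : 0 ≤ᶠ[ae (volume.restrict (Icc (1:ℝ) C))] fun x => g x - f x := by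
      refine ae_restrict_of_forall_mem measurableSet_Icc ?_
      intro x hx
      have hxs : x * (ν₁ + ν₂) ≤ 2 * E := by
        have := hx.2; rw [hC, le_div_iff₀ hs] at this; linarith
      simp only [Pi.zero_apply, hf, hg, sub_nonneg]
      rw [div_le_div_iff₀ hν₁ hν₂]
      nlinarith
    rw [← ofReal_integral_eq_lintegral_ofReal hInt hnn]
    congr 1
    have hfun : (fun x : ℝ => g x - f x) =
        fun x : ℝ => (2*E/ν₂ - 2*E/ν₁) + (ν₂/ν₁ - ν₁/ν₂) * x := by
      funext x
      rw [hf, hg]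
      field_simp
      ring
    rw [integral_Icc_eq_integral_Ioc, ← intervalIntegral.integral_of_le hC1, hfun]
    rw [intervalIntegral.integral_add intervalIntegrable_const
        (IntervalIntegrable.const_mul intervalIntegral.intervalIntegrable_id _),
      intervalIntegral.integral_const, intervalIntegral.integral_const_mul, integral_id]
    rw [hC, smul_eq_mul]
    field_simp
    ring
  have hInn : 0 ≤ (ν₁ - ν₂) * (2 * E - (ν₁ + ν₂)) ^ 2 / (2 * (ν₁ * ν₂ * (ν₁ + ν₂))) := by
    apply div_nonneg
    · exact mul_nonneg (by linarith) (sq_nonneg _)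
    · positivity
  rw [hunion, hswap, hT'vol, ← ENNReal.ofReal_add hInn hInn]
  congr 1
  field_simp
  ring
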